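/- (Seller-Optimal / Efficient Mechanism, Corollary 1 core.) Let f and g be continuous strictly positive densities on [0,1] with CDFs F and G, and fix α ∈ [0, 1/2]. Define V(q) = ∫_{G⁻¹(1−q)}^1 v g(v) dv, qᵉ(c) = 1 − G(c), and tᵉ(c) = c·qᵉ(c) + ∫_c^1 qᵉ(x) dx. Then: (i) tᵉ(c) = ∫_c^1 v g(v) dv for every c, so the buyer's surplus V(qᵉ(c)) − tᵉ(c) equals 0 at every type c; (ii) (qᵉ, tᵉ) satisfies the incentive-compatibility and participation constraints; and (iii) for every pair of measurable functions q : [0,1] → [0,1], t : [0,1] → ℝ satisfying t(c) − c·q(c) ≥ t(c′) − c·q(c′) and t(c) − c·q(c) ≥ 0 for all c, c′, together with the buyer's ex ante rationality constraint ∫_0^1 (V(q(c)) − t(c)) f(c) dc ≥ 0, the weighted objective ∫_0^1 [α(V(q(c)) − t(c)) + (1 − α)(t(c) − c·q(c))] f(c) dc is at most (1 − α)·∫_0^1 (∫_c^1 (v − c) g(v) dv) f(c) dc, which is the value attained by (qᵉ, tᵉ). -/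

import Mathlib

open MeasureTheory Set intervalIntegral

lemma stmt12_parts (h : ℝ → ℝ) (hh : Continuous h) (c : ℝ) :
    (∫ x in c..1, ((1:ℝ) - ∫ s in (0:ℝ)..x, h s)) =
      (1 - c) * (1 - ∫ s in (0:ℝ)..1, h s) + ∫ x in c..1, (x - c) * h x := by
  have hprim : ∀ x : ℝ, HasDerivAt (fun u => ∫ s in (0:ℝ)..u, h s) (h x) x :=
    fun x => (hh.integral_hasStrictDerivAt 0 x).hasDerivAt
  have hprim_cont : Continuous fun u => ∫ s in (0:ℝ)..u, h s :=
    continuous_iff_continuousAt.2 fun x => (hprim x).continuousAt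
  have hibp := integral_mul_deriv_eq_deriv_mul
    (u := fun x => x - c) (u' := fun _ => (1:ℝ)) (v := fun u => ∫ s in (0:ℝ)..u, h s)
    (v' := h) (a := c) (b := 1)
    (fun x _ => (hasDerivAt_id x).sub_const c) (fun x _ => hprim x)
    intervalIntegrable_const (hh.intervalIntegrable c 1)
  have hsplit : (∫ x in c..1, ((1:ℝ) - ∫ s in (0:ℝ)..x, h s)) =
      (∫ x in c..1, (1:ℝ)) - ∫ x in c..1, (∫ s in (0:ℝ)..x, h s) :=
    integral_sub intervalIntegrable_const (hprim_cont.intervalIntegrable c 1)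
  have h1 : (∫ x in c..1, (1:ℝ)) = 1 - c := by simp
  have h2 : (∫ x in c..1, (1:ℝ) * ∫ s in (0:ℝ)..x, h s) =
      ∫ x in c..1, (∫ s in (0:ℝ)..x, h s) := by
    simp
  rw [hsplit, h1]
  rw [h2] at hibp
  have : (∫ s in (0:ℝ)..c, h s) * 0 = 0 := by ring
  rw [hibp]
  ring

/-- **Corollary 1 core (Seller-Optimal / Efficient Mechanism, α ≤ 1/2).** The efficient
allocation `qᵉ(c) = 1 − G(c)` with transfer `tᵉ(c) = c·qᵉ(c) + ∫_c^1 qᵉ(x) dx` leaves the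
buyer with zero surplus at every type, is incentive compatible and individually rational,
and maximizes the weighted objective among all incentive compatible, individually rational
pairs satisfying the buyer's ex ante rationality constraint, attaining the value
`(1 − α)·∫ (∫_c^1 (v − c) g(v) dv) f(c) dc`. -/
theorem stmt_12
    (f g F G Ginv : ℝ → ℝ) (α : ℝ)
    (hα : α ∈ Icc (0:ℝ) (1/2))
    (hf_cont : ContinuousOn f (Icc 0 1))
    (hf_pos : ∀ x ∈ Icc (0:ℝ) 1, 0 < f x)
    (hf_mass : ∫ x in (0:ℝ)..1, f x = 1)
    (hg_cont : ContinuousOn g (Icc 0 1))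
    (hg_pos : ∀ x ∈ Icc (0:ℝ) 1, 0 < g x)
    (hg_mass : ∫ x in (0:ℝ)..1, g x = 1)
    (hF : ∀ x, F x = ∫ s in (0:ℝ)..x, f s)
    (hG : ∀ x, G x = ∫ s in (0:ℝ)..x, g s)
    (hGinv_mem : ∀ p ∈ Icc (0:ℝ) 1, Ginv p ∈ Icc (0:ℝ) 1)
    (hGinv : ∀ p ∈ Icc (0:ℝ) 1, G (Ginv p) = p)
    (V qe te : ℝ → ℝ)
    (hV : ∀ q ∈ Icc (0:ℝ) 1, V q = ∫ v in (Ginv (1 - q))..1, v * g v)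
    (hqe : ∀ c, qe c = 1 - G c)
    (hte : ∀ c, te c = c * qe c + ∫ x in c..1, qe x) :
    (∀ c ∈ Icc (0:ℝ) 1, te c = ∫ v in c..1, v * g v) ∧
    (∀ c ∈ Icc (0:ℝ) 1, V (qe c) - te c = 0) ∧
    (∀ c ∈ Icc (0:ℝ) 1, ∀ c' ∈ Icc (0:ℝ) 1, te c' - c * qe c' ≤ te c - c * qe c) ∧
    (∀ c ∈ Icc (0:ℝ) 1, 0 ≤ te c - c * qe c) ∧
    (∀ q t : ℝ → ℝ, Measurable q → Measurable t →
      (∀ c ∈ Icc (0:ℝ) 1, q c ∈ Icc (0:ℝ) 1) →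
      (∀ c ∈ Icc (0:ℝ) 1, ∀ c' ∈ Icc (0:ℝ) 1, t c' - c * q c' ≤ t c - c * q c) →
      (∀ c ∈ Icc (0:ℝ) 1, 0 ≤ t c - c * q c) →
      (0 ≤ ∫ c in (0:ℝ)..1, (V (q c) - t c) * f c) →
      (∫ c in (0:ℝ)..1, (α * (V (q c) - t c) + (1 - α) * (t c - c * q c)) * f c) ≤
        (1 - α) * ∫ c in (0:ℝ)..1, (∫ v in c..1, (v - c) * g v) * f c) ∧
    (∫ c in (0:ℝ)..1, (α * (V (qe c) - te c) + (1 - α) * (te c - c * qe c)) * f c) =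
      (1 - α) * ∫ c in (0:ℝ)..1, (∫ v in c..1, (v - c) * g v) * f c := by
  obtain ⟨hα0, hα2⟩ := hα
  have h01 : (0:ℝ) ∈ Icc (0:ℝ) 1 := ⟨le_rfl, zero_le_one⟩
  have h11 : (1:ℝ) ∈ Icc (0:ℝ) 1 := ⟨zero_le_one, le_rfl⟩
  -- clamping
  set cl : ℝ → ℝ := fun x => max 0 (min 1 x) with hcl_def
  have hcl_mem : ∀ x, cl x ∈ Icc (0:ℝ) 1 :=
    fun x => ⟨le_max_left _ _, max_le zero_le_one (min_le_left _ _)⟩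
  have hcl_id : ∀ x ∈ Icc (0:ℝ) 1, cl x = x := by
    intro x hx
    simp only [hcl_def]
    rw [min_eq_right hx.2, max_eq_right hx.1]
  have hcl_mono : Monotone cl :=
    fun a b hab => max_le_max le_rfl (min_le_min le_rfl hab)
  have hcl_cont : Continuous cl := continuous_const.max (continuous_const.min continuous_id)
  set gc : ℝ → ℝ := fun x => g (cl x) with hgc_def
  have hgc_cont : Continuous gc := hg_cont.comp_continuous hcl_cont hcl_mem
  have hgc_eq : ∀ x ∈ Icc (0:ℝ) 1, gc x = g x := by
    intro x hx; simp only [hgc_def]; rw [hcl_id x hx]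
  have hgc_pos : ∀ x, 0 < gc x := fun x => hg_pos _ (hcl_mem x)
  have hsub : ∀ a ∈ Icc (0:ℝ) 1, ∀ b ∈ Icc (0:ℝ) 1, uIcc a b ⊆ Icc (0:ℝ) 1 :=
    fun a ha b hb => uIcc_subset_Icc ha hb
  -- congruence of integrals between g and gc
  have hcongr : ∀ (φ : ℝ → ℝ → ℝ), ∀ a ∈ Icc (0:ℝ) 1, ∀ b ∈ Icc (0:ℝ) 1,
      (∫ v in a..b, φ v (g v)) = ∫ v in a..b, φ v (gc v) := by
    intro φ a ha b hb
    apply intervalIntegral.integral_congr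
    intro x hx
    simp only
    rw [hgc_eq x (hsub a ha b hb hx)]
  have hgc_mass : (∫ s in (0:ℝ)..1, gc s) = 1 := by
    rw [← hcongr (fun _ y => y) 0 h01 1 h11]; exact hg_mass
  -- primitive of gc
  have hprim : ∀ x : ℝ, HasDerivAt (fun u => ∫ s in (0:ℝ)..u, gc s) (gc x) x :=
    fun x => (hgc_cont.integral_hasStrictDerivAt 0 x).hasDerivAt
  have hprim_cont : Continuous fun u => ∫ s in (0:ℝ)..u, gc s :=
    continuous_iff_continuousAt.2 fun x => (hprim x).continuousAt
  have hGeq : ∀ x ∈ Icc (0:ℝ) 1, G x = ∫ s in (0:ℝ)..x, gc s := by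
    intro x hx
    rw [hG x]
    exact hcongr (fun _ y => y) 0 h01 x hx
  -- basic G facts
  have hG0 : G 0 = 0 := by rw [hG]; simp
  have hG1 : G 1 = 1 := by rw [hG]; exact hg_mass
  have hint1 : ∀ c ∈ Icc (0:ℝ) 1, (∫ s in c..1, gc s) = 1 - G c := by
    intro c hc
    have := integral_add_adjacent_intervals (μ := volume) (a := (0:ℝ)) (b := c) (c := 1)
      (f := gc) (hgc_cont.intervalIntegrable 0 c) (hgc_cont.intervalIntegrable c 1)
    rw [hgc_mass] at this
    rw [hGeq c hc]
    linarith
  have hGmono : ∀ a ∈ Icc (0:ℝ) 1, ∀ b ∈ Icc (0:ℝ) 1, a < b → G a < G b := by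
    intro a ha b hb hab
    have hadd := integral_add_adjacent_intervals (μ := volume) (a := (0:ℝ)) (b := a) (c := b)
      (f := gc) (hgc_cont.intervalIntegrable 0 a) (hgc_cont.intervalIntegrable a b)
    have hpos : 0 < ∫ s in a..b, gc s :=
      intervalIntegral_pos_of_pos_on (hgc_cont.intervalIntegrable a b)
        (fun x _ => hgc_pos x) hab
    rw [hGeq a ha, hGeq b hb]
    linarith
  have hGmono' : ∀ a ∈ Icc (0:ℝ) 1, ∀ b ∈ Icc (0:ℝ) 1, a ≤ b → G a ≤ G b := by
    intro a ha b hb hab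
    rcases eq_or_lt_of_le hab with rfl | h
    · exact le_rfl
    · exact (hGmono a ha b hb h).le
  have hGle : ∀ a ∈ Icc (0:ℝ) 1, ∀ b ∈ Icc (0:ℝ) 1, G a ≤ G b → a ≤ b := by
    intro a ha b hb hab
    by_contra h
    exact absurd hab (not_le.2 (hGmono b hb a ha (not_le.1 h)))
  have hGmem : ∀ c ∈ Icc (0:ℝ) 1, G c ∈ Icc (0:ℝ) 1 := by
    intro c hc
    constructor
    · rw [← hG0]; exact hGmono' 0 h01 c hc hc.1
    · rw [← hG1]; exact hGmono' c hc 1 h11 hc.2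
  have hGinvG : ∀ c ∈ Icc (0:ℝ) 1, Ginv (G c) = c := by
    intro c hc
    have h1 : Ginv (G c) ∈ Icc (0:ℝ) 1 := hGinv_mem _ (hGmem c hc)
    have h2 : G (Ginv (G c)) = G c := hGinv _ (hGmem c hc)
    exact le_antisymm (hGle _ h1 _ hc h2.le) (hGle _ hc _ h1 h2.ge)
  -- splitting (x - c) * gc
  have hsplit_sub : ∀ y c : ℝ, (∫ x in y..1, (x - c) * gc x) =
      (∫ x in y..1, x * gc x) - c * ∫ x in y..1, gc x := by
    intro y c
    rw [← intervalIntegral.integral_const_mul, ← intervalIntegral.integral_sub (f := fun x => x * gc x) (g := fun x => c * gc x)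
      ((continuous_id'.mul hgc_cont).intervalIntegrable y 1)
      ((continuous_const.mul hgc_cont : Continuous fun x => c * gc x).intervalIntegrable y 1)]
    apply intervalIntegral.integral_congr
    intro x _
    simp only
    ring
  -- part (i)
  have part1 : ∀ c ∈ Icc (0:ℝ) 1, te c = ∫ v in c..1, v * g v := by
    intro c hc
    have hqe_congr : (∫ x in c..1, qe x) = ∫ x in c..1, ((1:ℝ) - ∫ s in (0:ℝ)..x, gc s) := by
      apply intervalIntegral.integral_congr
      intro x hx
      simp only
      rw [hqe, hGeq x (hsub c hc 1 h11 hx)]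
    have hparts := stmt12_parts gc hgc_cont c
    rw [hgc_mass] at hparts
    have hvg : (∫ v in c..1, v * g v) = ∫ v in c..1, v * gc v :=
      hcongr (fun v y => v * y) c hc 1 h11
    rw [hte, hqe, hvg, hqe_congr, hparts, hsplit_sub c c, hint1 c hc]
    ring
  -- membership of qe
  have hqe_mem : ∀ c ∈ Icc (0:ℝ) 1, qe c ∈ Icc (0:ℝ) 1 := by
    intro c hc
    rw [hqe]
    have := hGmem c hc
    exact ⟨by linarith [this.2], by linarith [this.1]⟩
  -- part (ii)
  have part2 : ∀ c ∈ Icc (0:ℝ) 1, V (qe c) - te c = 0 := by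
    intro c hc
    have h1 : 1 - qe c = G c := by rw [hqe]; ring
    have h2 : V (qe c) = ∫ v in (Ginv (1 - qe c))..1, v * g v := hV _ (hqe_mem c hc)
    rw [h2, h1, hGinvG c hc, ← part1 c hc]
    ring
  -- qe integrable and antitone
  have hqe_int : ∀ a ∈ Icc (0:ℝ) 1, ∀ b ∈ Icc (0:ℝ) 1, IntervalIntegrable qe volume a b := by
    intro a ha b hb
    apply IntervalIntegrable.congr_ae
      (Continuous.intervalIntegrable (u := fun x => 1 - ∫ s in (0:ℝ)..x, gc s) (continuous_const.sub hprim_cont) a b)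
    filter_upwards [ae_restrict_mem measurableSet_uIoc] with x hx
    have hx' : x ∈ Icc (0:ℝ) 1 := hsub a ha b hb (uIoc_subset_uIcc hx)
    rw [hqe, hGeq x hx']
  have hqe_anti : ∀ a ∈ Icc (0:ℝ) 1, ∀ b ∈ Icc (0:ℝ) 1, a ≤ b → qe b ≤ qe a := by
    intro a ha b hb hab
    rw [hqe, hqe]
    have := hGmono' a ha b hb hab
    linarith
  -- part (iii)
  have part3 : ∀ c ∈ Icc (0:ℝ) 1, ∀ c' ∈ Icc (0:ℝ) 1,
      te c' - c * qe c' ≤ te c - c * qe c := by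
    intro c hc c' hc'
    rw [hte, hte]
    have hsplit : (∫ x in c..1, qe x) = (∫ x in c..c', qe x) + ∫ x in c'..1, qe x :=
      (integral_add_adjacent_intervals (hqe_int c hc c' hc') (hqe_int c' hc' 1 h11)).symm
    have hkey : (c' - c) * qe c' ≤ ∫ x in c..c', qe x := by
      rcases le_total c c' with h | h
      · have h1 : (∫ _x in c..c', qe c') ≤ ∫ x in c..c', qe x :=
          intervalIntegral.integral_mono_on h intervalIntegrable_const
            (hqe_int c hc c' hc')
            (fun x hx => hqe_anti x ⟨le_trans hc.1 hx.1, le_trans hx.2 hc'.2⟩ c' hc' hx.2)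
        simpa using h1
      · have h1 : (∫ x in c'..c, qe x) ≤ ∫ _x in c'..c, qe c' :=
          intervalIntegral.integral_mono_on h (hqe_int c' hc' c hc)
            intervalIntegrable_const
            (fun x hx => hqe_anti c' hc' x ⟨le_trans hc'.1 hx.1, le_trans hx.2 hc.2⟩ hx.1)
        have h2 : (∫ x in c'..c, qe x) ≤ (c - c') * qe c' := by simpa using h1
        have h3 : (∫ x in c..c', qe x) = -∫ x in c'..c, qe x := integral_symm c' c
        linarith
    rw [hsplit]
    linarith
  -- part (iv)
  have part4 : ∀ c ∈ Icc (0:ℝ) 1, 0 ≤ te c - c * qe c := by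
    intro c hc
    rw [hte]
    have : 0 ≤ ∫ x in c..1, qe x := by
      apply intervalIntegral.integral_nonneg hc.2
      intro u hu
      have hu' : u ∈ Icc (0:ℝ) 1 := ⟨le_trans hc.1 hu.1, hu.2⟩
      rw [hqe]
      linarith [(hGmem u hu').2]
    linarith
  -- surplus identity
  have hte_surplus : ∀ c ∈ Icc (0:ℝ) 1,
      te c - c * qe c = ∫ v in c..1, (v - c) * g v := by
    intro c hc
    rw [part1 c hc, hqe, hcongr (fun v y => v * y) c hc 1 h11,
      hcongr (fun v y => (v - c) * y) c hc 1 h11, ← hint1 c hc, hsplit_sub c c]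
  -- part (v)
  have part5 : ∀ q t : ℝ → ℝ, Measurable q → Measurable t →
      (∀ c ∈ Icc (0:ℝ) 1, q c ∈ Icc (0:ℝ) 1) →
      (∀ c ∈ Icc (0:ℝ) 1, ∀ c' ∈ Icc (0:ℝ) 1, t c' - c * q c' ≤ t c - c * q c) →
      (∀ c ∈ Icc (0:ℝ) 1, 0 ≤ t c - c * q c) →
      (0 ≤ ∫ c in (0:ℝ)..1, (V (q c) - t c) * f c) →
      (∫ c in (0:ℝ)..1, (α * (V (q c) - t c) + (1 - α) * (t c - c * q c)) * f c) ≤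
        (1 - α) * ∫ c in (0:ℝ)..1, (∫ v in c..1, (v - c) * g v) * f c := by
    intro q t hqm htm hq_mem hIC hIR hEA
    -- bounds on t
    have ht0 : ∀ c ∈ Icc (0:ℝ) 1, 0 ≤ t c := by
      intro c hc
      have h1 := hIR c hc
      have h2 : 0 ≤ c * q c := mul_nonneg hc.1 (hq_mem c hc).1
      linarith
    have htub : ∀ c ∈ Icc (0:ℝ) 1, t c ≤ t 0 := by
      intro c hc
      have := hIC 0 h01 c hc
      simpa using this
    -- W0
    set W0 : ℝ → ℝ := fun x => ∫ v in x..1, v * gc v with hW0_def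
    have hprim2_cont : Continuous fun u => ∫ v in (0:ℝ)..u, v * gc v :=
      continuous_iff_continuousAt.2 fun x =>
        (((continuous_id'.mul hgc_cont)).integral_hasStrictDerivAt 0 x).hasDerivAt.continuousAt
    have hW0_eq : ∀ x : ℝ, W0 x = (∫ v in (0:ℝ)..1, v * gc v) - ∫ v in (0:ℝ)..x, v * gc v := by
      intro x
      have := integral_add_adjacent_intervals (μ := volume) (a := (0:ℝ)) (b := x) (c := 1)
        (f := fun v => v * gc v) ((continuous_id'.mul hgc_cont).intervalIntegrable 0 x)
        ((continuous_id'.mul hgc_cont).intervalIntegrable x 1)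
      simp only [hW0_def]
      linarith
    have hW0_cont : Continuous W0 := by
      have : W0 = fun x => (∫ v in (0:ℝ)..1, v * gc v) - ∫ v in (0:ℝ)..x, v * gc v :=
        funext hW0_eq
      rw [this]
      exact continuous_const.sub hprim2_cont
    obtain ⟨MW, hMW⟩ := isCompact_Icc.exists_bound_of_continuousOn
      (hW0_cont.continuousOn : ContinuousOn W0 (Icc (0:ℝ) 1))
    obtain ⟨Mf, hMf⟩ := isCompact_Icc.exists_bound_of_continuousOn hf_cont
    have hMW0 : 0 ≤ MW := le_trans (norm_nonneg _) (hMW 0 h01)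
    have hMf0 : 0 ≤ Mf := le_trans (norm_nonneg _) (hMf 0 h01)
    -- inverse composed with clamp
    set hinv : ℝ → ℝ := fun p => Ginv (1 - cl p) with hhinv_def
    have hmem1 : ∀ p : ℝ, 1 - cl p ∈ Icc (0:ℝ) 1 :=
      fun p => ⟨by linarith [(hcl_mem p).2], by linarith [(hcl_mem p).1]⟩
    have hhinv_mem : ∀ p, hinv p ∈ Icc (0:ℝ) 1 := fun p => hGinv_mem _ (hmem1 p)
    have hhinv_anti : Antitone hinv := by
      intro p1 p2 h
      apply hGle _ (hGinv_mem _ (hmem1 p2)) _ (hGinv_mem _ (hmem1 p1))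
      rw [hGinv _ (hmem1 p2), hGinv _ (hmem1 p1)]
      have := hcl_mono h
      linarith
    have hVW : ∀ c ∈ Icc (0:ℝ) 1, V (q c) = W0 (hinv (q c)) := by
      intro c hc
      have hqc := hq_mem c hc
      rw [hV _ hqc]
      have h2 : hinv (q c) = Ginv (1 - q c) := by
        simp only [hhinv_def]
        rw [hcl_id _ hqc]
      rw [h2]
      have h1 : 1 - q c ∈ Icc (0:ℝ) 1 := ⟨by linarith [hqc.2], by linarith [hqc.1]⟩
      simp only [hW0_def]
      exact hcongr (fun v y => v * y) _ (hGinv_mem _ h1) 1 h11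
    -- ft
    set ft : ℝ → ℝ := fun x => f (cl x) with hft_def
    have hft_cont : Continuous ft := hf_cont.comp_continuous hcl_cont hcl_mem
    have hft_eq : ∀ x ∈ Icc (0:ℝ) 1, ft x = f x := by
      intro x hx; simp only [hft_def]; rw [hcl_id x hx]
    -- integrability machinery
    have key_int : ∀ (u : ℝ → ℝ) (M : ℝ),
        AEStronglyMeasurable u (volume.restrict (Ioc (0:ℝ) 1)) →
        (∀ c ∈ Icc (0:ℝ) 1, ‖u c‖ ≤ M) → IntervalIntegrable u volume 0 1 := by
      intro u M hmeas hbd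
      rw [intervalIntegrable_iff_integrableOn_Ioc_of_le zero_le_one]
      refine ⟨hmeas, ?_⟩
      apply HasFiniteIntegral.restrict_of_bounded (C := M) measure_Ioc_lt_top
      filter_upwards [ae_restrict_mem measurableSet_Ioc] with x hx
      exact hbd x (Ioc_subset_Icc_self hx)
    -- A integrable
    have hA_meas : AEStronglyMeasurable (fun c => (V (q c) - t c) * f c)
        (volume.restrict (Ioc (0:ℝ) 1)) := by
      have hm : Measurable fun c => (W0 (hinv (q c)) - t c) * ft c :=
        ((hW0_cont.measurable.comp (hhinv_anti.measurable.comp hqm)).sub htm).mul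
          hft_cont.measurable
      apply hm.aestronglyMeasurable.congr
      filter_upwards [ae_restrict_mem measurableSet_Ioc] with x hx
      have hx' : x ∈ Icc (0:ℝ) 1 := Ioc_subset_Icc_self hx
      rw [hVW x hx', hft_eq x hx']
    have hA_bd : ∀ c ∈ Icc (0:ℝ) 1, ‖(V (q c) - t c) * f c‖ ≤ (MW + t 0) * Mf := by
      intro c hc
      rw [norm_mul]
      have h1 : ‖V (q c)‖ ≤ MW := by
        rw [hVW c hc]
        exact hMW _ (hhinv_mem _)
      have h2 : ‖t c‖ ≤ t 0 := by
        rw [Real.norm_eq_abs]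
        exact abs_le.2 ⟨by linarith [ht0 c hc, ht0 0 h01], htub c hc⟩
      have h3 : ‖V (q c) - t c‖ ≤ MW + t 0 :=
        le_trans (norm_sub_le _ _) (add_le_add h1 h2)
      exact mul_le_mul h3 (hMf c hc) (norm_nonneg _) (by linarith [ht0 0 h01])
    have hA_int : IntervalIntegrable (fun c => (V (q c) - t c) * f c) volume 0 1 :=
      key_int _ _ hA_meas hA_bd
    -- B integrable
    have hB_meas : AEStronglyMeasurable (fun c => (t c - c * q c) * f c)
        (volume.restrict (Ioc (0:ℝ) 1)) := by
      have hm : Measurable fun c => (t c - c * q c) * ft c :=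
        (htm.sub (measurable_id.mul hqm)).mul hft_cont.measurable
      apply hm.aestronglyMeasurable.congr
      filter_upwards [ae_restrict_mem measurableSet_Ioc] with x hx
      have hx' : x ∈ Icc (0:ℝ) 1 := Ioc_subset_Icc_self hx
      rw [hft_eq x hx']
    have hB_bd : ∀ c ∈ Icc (0:ℝ) 1, ‖(t c - c * q c) * f c‖ ≤ t 0 * Mf := by
      intro c hc
      rw [norm_mul]
      have h2 : 0 ≤ c * q c := mul_nonneg hc.1 (hq_mem c hc).1
      have h1 : ‖t c - c * q c‖ ≤ t 0 := by
        rw [Real.norm_eq_abs]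
        exact abs_le.2 ⟨by linarith [hIR c hc, ht0 0 h01], by linarith [htub c hc]⟩
      exact mul_le_mul h1 (hMf c hc) (norm_nonneg _) (ht0 0 h01)
    have hB_int : IntervalIntegrable (fun c => (t c - c * q c) * f c) volume 0 1 :=
      key_int _ _ hB_meas hB_bd
    -- Se integrable
    have hSe0_eq : ∀ c : ℝ, (∫ v in c..1, (v - c) * gc v) =
        W0 c - c * ((∫ s in (0:ℝ)..1, gc s) - ∫ s in (0:ℝ)..c, gc s) := by
      intro c
      have hadj : (∫ s in c..1, gc s) = (∫ s in (0:ℝ)..1, gc s) - ∫ s in (0:ℝ)..c, gc s := by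
        have := integral_add_adjacent_intervals (μ := volume) (a := (0:ℝ)) (b := c) (c := 1)
          (f := gc) (hgc_cont.intervalIntegrable 0 c) (hgc_cont.intervalIntegrable c 1)
        linarith
      rw [hsplit_sub c c, hadj, hW0_eq c, ← hW0_eq c]
    have hSe0_cont : Continuous fun c : ℝ =>
        W0 c - c * ((∫ s in (0:ℝ)..1, gc s) - ∫ s in (0:ℝ)..c, gc s) :=
      hW0_cont.sub (continuous_id'.mul (continuous_const.sub hprim_cont))
    have hS_int : IntervalIntegrable (fun c => (∫ v in c..1, (v - c) * g v) * f c)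
        volume 0 1 := by
      apply IntervalIntegrable.congr_ae (Continuous.intervalIntegrable (u := fun c => (W0 c - c * ((∫ s in (0:ℝ)..1, gc s) - ∫ s in (0:ℝ)..c, gc s)) * ft c) (hSe0_cont.mul hft_cont) 0 1)
      filter_upwards [ae_restrict_mem measurableSet_uIoc] with x hx
      have hx' : x ∈ Icc (0:ℝ) 1 := hsub 0 h01 1 h11 (uIoc_subset_uIcc hx)
      rw [← hSe0_eq x, ← hcongr (fun v y => (v - x) * y) x hx' 1 h11, hft_eq x hx']
    -- pointwise surplus bound
    have hsurplus : ∀ c ∈ Icc (0:ℝ) 1, V (q c) - c * q c ≤ ∫ v in c..1, (v - c) * g v := by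
      intro c hc
      have hqc := hq_mem c hc
      have h1mem : 1 - q c ∈ Icc (0:ℝ) 1 := ⟨by linarith [hqc.2], by linarith [hqc.1]⟩
      set y := Ginv (1 - q c) with hy_def
      have hy : y ∈ Icc (0:ℝ) 1 := hGinv_mem _ h1mem
      have hGy : G y = 1 - q c := hGinv _ h1mem
      have hq_eq : q c = ∫ s in y..1, gc s := by rw [hint1 y hy, hGy]; ring
      have hVeq : V (q c) = ∫ v in y..1, v * gc v := by
        rw [hV _ hqc]
        exact hcongr (fun v w => v * w) _ hy 1 h11
      have hSe : (∫ v in c..1, (v - c) * g v) = ∫ v in c..1, (v - c) * gc v :=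
        hcongr (fun v w => (v - c) * w) c hc 1 h11
      have hVal : V (q c) - c * q c = ∫ v in y..1, (v - c) * gc v := by
        rw [hVeq, hq_eq, hsplit_sub y c]
      rw [hVal, hSe]
      have hii : ∀ a b : ℝ, IntervalIntegrable (fun v => (v - c) * gc v) volume a b :=
        fun a b => ((continuous_id'.sub continuous_const).mul hgc_cont).intervalIntegrable a b
      have hadd : (∫ v in y..c, (v - c) * gc v) + (∫ v in c..1, (v - c) * gc v)
          = ∫ v in y..1, (v - c) * gc v :=
        integral_add_adjacent_intervals (hii y c) (hii c 1)
      have hneg : (∫ v in y..c, (v - c) * gc v) ≤ 0 := by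
        rcases le_total y c with h | h
        · have h2 : 0 ≤ ∫ v in y..c, -((v - c) * gc v) :=
            intervalIntegral.integral_nonneg h
              (fun u hu => by nlinarith [hgc_pos u, hu.2])
          rw [intervalIntegral.integral_neg] at h2
          linarith
        · have h2 : 0 ≤ ∫ v in c..y, (v - c) * gc v :=
            intervalIntegral.integral_nonneg h
              (fun u hu => mul_nonneg (by linarith [hu.1]) (hgc_pos u).le)
          have h3 : (∫ v in y..c, (v - c) * gc v) = -∫ v in c..y, (v - c) * gc v :=
            integral_symm c y
          linarith
      linarith
    -- main chain
    have hf0 : ∀ x ∈ Icc (0:ℝ) 1, 0 ≤ f x := fun x hx => (hf_pos x hx).le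
    have hobj_eq : (∫ c in (0:ℝ)..1, (α * (V (q c) - t c) + (1 - α) * (t c - c * q c)) * f c)
        = α * (∫ c in (0:ℝ)..1, (V (q c) - t c) * f c)
          + (1 - α) * ∫ c in (0:ℝ)..1, (t c - c * q c) * f c := by
      rw [← intervalIntegral.integral_const_mul, ← intervalIntegral.integral_const_mul,
        ← intervalIntegral.integral_add (hA_int.const_mul α) (hB_int.const_mul (1 - α))]
      apply intervalIntegral.integral_congr
      intro x _
      simp only
      ring
    have hAB_int : IntervalIntegrable (fun c => (V (q c) - c * q c) * f c) volume 0 1 := by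
      apply (hA_int.add hB_int).congr_ae
      filter_upwards with x
      ring
    have hsum_eq : (∫ c in (0:ℝ)..1, (V (q c) - t c) * f c)
        + (∫ c in (0:ℝ)..1, (t c - c * q c) * f c)
        = ∫ c in (0:ℝ)..1, (V (q c) - c * q c) * f c := by
      rw [← intervalIntegral.integral_add hA_int hB_int]
      apply intervalIntegral.integral_congr
      intro x _
      simp only [Pi.add_apply]
      ring
    have hmono : (∫ c in (0:ℝ)..1, (V (q c) - c * q c) * f c)
        ≤ ∫ c in (0:ℝ)..1, (∫ v in c..1, (v - c) * g v) * f c :=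
      intervalIntegral.integral_mono_on zero_le_one hAB_int hS_int
        (fun x hx => mul_le_mul_of_nonneg_right (hsurplus x hx) (hf0 x hx))
    rw [hobj_eq]
    have e1 : α * (∫ c in (0:ℝ)..1, (V (q c) - t c) * f c)
        ≤ (1 - α) * ∫ c in (0:ℝ)..1, (V (q c) - t c) * f c :=
      mul_le_mul_of_nonneg_right (by linarith) hEA
    have e2 : (1 - α) * (∫ c in (0:ℝ)..1, (V (q c) - c * q c) * f c)
        ≤ (1 - α) * ∫ c in (0:ℝ)..1, (∫ v in c..1, (v - c) * g v) * f c :=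
      mul_le_mul_of_nonneg_left hmono (by linarith)
    nlinarith [hsum_eq, e1, e2]
  -- part (vi)
  have part6 : (∫ c in (0:ℝ)..1,
        (α * (V (qe c) - te c) + (1 - α) * (te c - c * qe c)) * f c) =
      (1 - α) * ∫ c in (0:ℝ)..1, (∫ v in c..1, (v - c) * g v) * f c := by
    rw [← intervalIntegral.integral_const_mul]
    apply intervalIntegral.integral_congr
    intro c hc
    have hc' : c ∈ Icc (0:ℝ) 1 := by rwa [uIcc_of_le zero_le_one] at hc
    simp only
    rw [part2 c hc', hte_surplus c hc']
    ring
  exact ⟨part1, part2, part3, part4, part5, part6⟩
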